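/- Let a, b ∈ ℤ and suppose the polynomial F(x) = x⁸ + a·x⁴ + b is monogenic. Then b is squarefree; equivalently, if there exists a prime q with q² dividing b, then x⁸ + a·x⁴ + b is not monogenic. -/

import Mathlib

open Polynomial

/-- A monic polynomial `f ∈ ℤ[x]` is *monogenic* if it is irreducible over `ℚ` and,
for any number field `K` generated over `ℚ` by a root `θ` of `f`, the ring `ℤ[θ]`
is the full ring of integers (the integral closure of `ℤ`) of `K`. -/
def IsMonogenic (f : Polynomial ℤ) : Prop :=
  f.Monic ∧ Irreducible (f.map (Int.castRingHom ℚ)) ∧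
    ∀ (K : Type) [Field K] [NumberField K] (θ : K),
      Polynomial.aeval θ f = 0 →
      Algebra.adjoin ℚ {θ} = (⊤ : Subalgebra ℚ K) →
      Algebra.adjoin ℤ {θ} = integralClosure ℤ K

theorem stmt_5 (a b : ℤ)
    (hmono : IsMonogenic (X ^ 8 + C a * X ^ 4 + C b)) :
    Squarefree b := by
  by_contra hsf
  obtain ⟨hmonic, hirr, hmax⟩ := hmono
  set f : ℤ[X] := X ^ 8 + C a * X ^ 4 + C b with hf
  set F : ℚ[X] := f.map (Int.castRingHom ℚ) with hF
  have hFmonic : F.Monic := hmonic.map _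
  -- b ≠ 0
  have hb0 : b ≠ 0 := by
    rintro rfl
    have hfac : F = X ^ 4 * (X ^ 4 + C ((a : ℚ))) := by
      simp [hF, hf, Polynomial.map_add, Polynomial.map_mul, Polynomial.map_pow]
      ring
    rcases hirr.isUnit_or_isUnit hfac with h | h
    · have := natDegree_eq_zero_of_isUnit h
      simp at this
    · have := natDegree_eq_zero_of_isUnit h
      have h4 : (X ^ 4 + C ((a : ℚ))).natDegree = 4 := by
        compute_degree!
      omega
  -- extract a prime p with p * p ∣ b
  rw [Squarefree] at hsf
  push_neg at hsf
  obtain ⟨x, hxx, hxu⟩ := hsf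
  obtain ⟨p, hp, hpx⟩ := Int.exists_prime_and_dvd
    (fun h1 => hxu (Int.isUnit_iff_natAbs_eq.mpr h1))
  have hppb : p * p ∣ b := dvd_trans (mul_dvd_mul hpx hpx) hxx
  obtain ⟨c, hc⟩ := hppb
  -- set up the number field
  haveI : Fact (Irreducible F) := ⟨hirr⟩
  set K : Type := AdjoinRoot F with hK
  haveI : FiniteDimensional ℚ K := PowerBasis.finite (AdjoinRoot.powerBasis hFmonic.ne_zero)
  haveI : CharZero K := charZero_of_injective_algebraMap (algebraMap ℚ K).injective
  haveI : NumberField K := ⟨⟩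
  set θ : K := AdjoinRoot.root F with hθ
  have hrootQ : aeval θ F = 0 := by
    rw [hθ, aeval_def]; exact AdjoinRoot.eval₂_root F
  have hroot : aeval θ f = 0 := by
    have h2 : aeval θ (f.map (algebraMap ℤ ℚ)) = 0 := by
      rw [algebraMap_int_eq]; exact hrootQ
    rwa [aeval_map_algebraMap] at h2
  have htop : Algebra.adjoin ℚ {θ} = (⊤ : Subalgebra ℚ K) := AdjoinRoot.adjoinRoot_eq_top
  have hADJ : Algebra.adjoin ℤ {θ} = integralClosure ℤ K := hmax K θ hroot htop
  -- basic equation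
  have e : θ ^ 8 + (a : K) * θ ^ 4 + (b : K) = 0 := by
    have := hroot
    simp only [hf, map_add, map_mul, map_pow, aeval_X, aeval_C, eq_intCast,
      map_intCast] at this
    exact this
  have hθ0 : θ ≠ 0 := by
    intro h0
    rw [h0] at e
    simp at e
    exact hb0 (by exact_mod_cast e)
  have hpK : (p : K) ≠ 0 := Int.cast_ne_zero.mpr hp.ne_zero
  -- the witness element
  set β : K := (θ ^ 7 + (a : K) * θ ^ 3) / (p : K) with hβ
  have hqβ : (p : K) * β = θ ^ 7 + (a : K) * θ ^ 3 := by
    rw [hβ, mul_div_cancel₀ _ hpK]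
  have hbK : (b : K) = (p : K) * (p : K) * (c : K) := by
    rw [hc, Int.cast_mul, Int.cast_mul]
  have hβθ : β * θ = -((p : K) * (c : K)) := by
    apply mul_left_cancel₀ hpK
    have : (p : K) * (β * θ) = (θ ^ 8 + (a : K) * θ ^ 4) := by
      rw [← mul_assoc, hqβ]; ring
    rw [this]
    have : θ ^ 8 + (a : K) * θ ^ 4 = -(b : K) := by linear_combination e
    rw [this, hbK]; ring
  -- β is integral over ℤ
  have key : β ^ 8 + (a : K) * (p : K) ^ 2 * (c : K) ^ 3 * β ^ 4 + (p : K) ^ 6 * (c : K) ^ 7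
      = 0 := by
    have h8 : (β ^ 8 + (a : K) * (p : K) ^ 2 * (c : K) ^ 3 * β ^ 4
        + (p : K) ^ 6 * (c : K) ^ 7) * θ ^ 8
        = (p : K) ^ 6 * (c : K) ^ 7 * (θ ^ 8 + (a : K) * θ ^ 4 + (b : K)) := by
      calc (β ^ 8 + (a : K) * (p : K) ^ 2 * (c : K) ^ 3 * β ^ 4
            + (p : K) ^ 6 * (c : K) ^ 7) * θ ^ 8
          = (β * θ) ^ 8 + (a : K) * (p : K) ^ 2 * (c : K) ^ 3 * (β * θ) ^ 4 * θ ^ 4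
            + (p : K) ^ 6 * (c : K) ^ 7 * θ ^ 8 := by ring
        _ = (-((p : K) * (c : K))) ^ 8
            + (a : K) * (p : K) ^ 2 * (c : K) ^ 3 * (-((p : K) * (c : K))) ^ 4 * θ ^ 4
            + (p : K) ^ 6 * (c : K) ^ 7 * θ ^ 8 := by rw [hβθ]
        _ = (p : K) ^ 6 * (c : K) ^ 7 * (θ ^ 8 + (a : K) * θ ^ 4
            + ((p : K) * (p : K) * (c : K))) := by ring
        _ = _ := by rw [← hbK]
    rw [e, mul_zero] at h8
    exact (mul_eq_zero.mp h8).resolve_right (pow_ne_zero 8 hθ0)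
  have hβint : IsIntegral ℤ β := by
    refine ⟨X ^ 8 + C (a * p ^ 2 * c ^ 3) * X ^ 4 + C (p ^ 6 * c ^ 7), ?_, ?_⟩
    · have hm : (X ^ 8 + (C (a * p ^ 2 * c ^ 3) * X ^ 4 + C (p ^ 6 * c ^ 7)) : ℤ[X]).Monic := by
        apply Polynomial.monic_X_pow_add
        refine lt_of_le_of_lt (degree_add_le _ _) ?_
        refine max_lt ?_ ?_
        · refine lt_of_le_of_lt (degree_mul_le _ _) ?_
          refine lt_of_le_of_lt (add_le_add degree_C_le (le_of_eq (degree_X_pow 4))) ?_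
          norm_num
        · exact lt_of_le_of_lt degree_C_le (by norm_num)
      simpa [add_assoc] using hm
    · simp only [eval₂_add, eval₂_mul, eval₂_pow, eval₂_X, eval₂_C,
        algebraMap_int_eq, Int.coe_castRingHom]
      simp only [eq_intCast, Int.cast_mul, Int.cast_pow]
      linear_combination key
  -- hence β ∈ ℤ[θ]
  have hmem : β ∈ Algebra.adjoin ℤ ({θ} : Set K) := by
    rw [hADJ]
    exact (mem_integralClosure_iff ℤ K).mpr hβint
  rw [Algebra.adjoin_singleton_eq_range_aeval] at hmem
  simp only [AlgHom.mem_range] at hmem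
  obtain ⟨g, hg⟩ := hmem
  -- get a divisibility in ℤ[X]
  set h : ℤ[X] := C p * g - (X ^ 7 + C a * X ^ 3) with hh
  have haevalh : aeval θ h = 0 := by
    simp only [hh, map_sub, map_add, map_mul, map_pow, aeval_X, aeval_C, eq_intCast,
      map_intCast]
    rw [hg]
    linear_combination hqβ
  have hmp : minpoly ℚ θ = F :=
    (minpoly.eq_of_irreducible_of_monic hirr hrootQ hFmonic).symm
  have hFdvd : F ∣ h.map (algebraMap ℤ ℚ) := by
    rw [← hmp]
    apply minpoly.dvd
    rw [aeval_map_algebraMap]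
    exact haevalh
  have hfdvd : f ∣ h := by
    rw [← Polynomial.map_dvd_map (algebraMap ℤ ℚ)
      (fun x y hxy => by
        rw [algebraMap_int_eq, Int.coe_castRingHom] at hxy
        exact Int.cast_injective hxy) hmonic]
    rw [hF, algebraMap_int_eq] at hFdvd
    exact hFdvd
  obtain ⟨s, hs⟩ := hfdvd
  -- reduce mod p
  set q : ℕ := p.natAbs with hq
  haveI : Fact (q.Prime) := ⟨Int.prime_iff_natAbs_prime.mp hp⟩
  set φ : ℤ →+* ZMod q := Int.castRingHom (ZMod q) with hφ
  have hpφ : φ p = 0 := by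
    rw [hφ]
    simp only [Int.coe_castRingHom]
    rw [ZMod.intCast_zmod_eq_zero_iff_dvd]
    exact Int.natAbs_dvd.mpr dvd_rfl
  have hmaph : h.map φ = -(X ^ 7 + C (φ a) * X ^ 3) := by
    rw [hh, Polynomial.map_sub, Polynomial.map_mul, Polynomial.map_C, hpφ, Polynomial.C_0,
      zero_mul, Polynomial.map_add, Polynomial.map_mul, Polynomial.map_pow,
      Polynomial.map_pow, Polynomial.map_X, Polynomial.map_C]
    ring
  have hmaps : f.map φ * s.map φ = -(X ^ 7 + C (φ a) * X ^ 3) := by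
    rw [← Polynomial.map_mul, ← hs, hmaph]
  have hfφmonic : (f.map φ).Monic := hmonic.map φ
  have hfdeg : f.natDegree = 8 := by
    rw [hf]; compute_degree!
  have hfφdeg : (f.map φ).natDegree = 8 := by
    rw [hmonic.natDegree_map φ, hfdeg]
  have hrhs7 : (-(X ^ 7 + C (φ a) * X ^ 3) : (ZMod q)[X]).natDegree ≤ 7 := by
    rw [natDegree_neg]
    refine le_trans (natDegree_add_le _ _) (max_le ?_ ?_)
    · simp
    · exact le_trans (natDegree_mul_le) (by simp)
  by_cases hs0 : s.map φ = 0
  · rw [hs0, mul_zero] at hmaps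
    have : (-(X ^ 7 + C (φ a) * X ^ 3) : (ZMod q)[X]).coeff 7 = 0 := by
      rw [← hmaps]; simp
    simp [coeff_X_pow, coeff_C_mul] at this
  · have hdeg : (f.map φ * s.map φ).natDegree = 8 + (s.map φ).natDegree := by
      rw [natDegree_mul hfφmonic.ne_zero hs0, hfφdeg]
    rw [hmaps] at hdeg
    omega
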